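/- Let a < b be real numbers and x ∈ [(5a+b)/6, (a+5b)/6]. Let f : ℝ → ℝ be continuous on [a,b] and differentiable on (a,b), and let M ≥ 0 satisfy |f'(t)| ≤ M for all t ∈ (a,b). Then |∫_a^b f(t) dt − ((b−a)/3)·((f(a) + f(b))/2 + 2·f(x))| ≤ M·( (b−a)²/36 + (x − (5a+b)/6)²/2 + (x − (a+5b)/6)²/2 ). -/

import Mathlib

open intervalIntegral MeasureTheory Set

lemma my_integral_sub_const (c p q : ℝ) :
    ∫ t in p..q, (t - c) = (q - c)^2/2 - (p - c)^2/2 := by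
  have h : ∀ t ∈ Set.uIcc p q, HasDerivAt (fun t => (t - c)^2/2) (t - c) t := by
    intro t _
    have := (((hasDerivAt_id t).sub_const c).pow 2).div_const 2
    exact this.congr_deriv (by simp only [id]; ring)
  have hi : IntervalIntegrable (fun t => t - c) MeasureTheory.volume p q :=
    (continuous_id.sub continuous_const).intervalIntegrable _ _
  exact intervalIntegral.integral_eq_sub_of_hasDerivAt h hi

lemma my_integral_abs_sub (p c q : ℝ) (h1 : p ≤ c) (h2 : c ≤ q) :
    ∫ t in p..q, |t - c| = (c - p)^2/2 + (q - c)^2/2 := by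
  have hcont : Continuous (fun t : ℝ => |t - c|) :=
    continuous_abs.comp (continuous_id.sub continuous_const)
  have i1 : ∫ t in p..c, |t - c| = (c - p)^2/2 := by
    rw [intervalIntegral.integral_congr (g := fun t => -(t - c))
      (fun t ht => by
        rw [Set.uIcc_of_le h1] at ht
        simp only [abs_sub_comm, abs_of_nonneg (sub_nonneg.2 ht.2)]
        ring)]
    rw [intervalIntegral.integral_neg, my_integral_sub_const]
    ring
  have i2 : ∫ t in c..q, |t - c| = (q - c)^2/2 := by
    rw [intervalIntegral.integral_congr (g := fun t => (t - c))
      (fun t ht => by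
        rw [Set.uIcc_of_le h2] at ht
        exact abs_of_nonneg (sub_nonneg.2 ht.1))]
    rw [my_integral_sub_const]
    ring
  rw [← intervalIntegral.integral_add_adjacent_intervals
    (hcont.intervalIntegrable p c) (hcont.intervalIntegrable c q), i1, i2]

/-- Corollary 4.5: three-point inequality with α₁ = (5a+b)/6, α₂ = (a+5b)/6. -/
theorem corollary_4_5 (a b x M : ℝ) (hab : a < b)
    (hx : x ∈ Set.Icc ((5 * a + b) / 6) ((a + 5 * b) / 6))
    (f f' : ℝ → ℝ)
    (hcont : ContinuousOn f (Set.Icc a b))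
    (hderiv : ∀ t ∈ Set.Ioo a b, HasDerivAt f (f' t) t)
    (hM : 0 ≤ M) (hbound : ∀ t ∈ Set.Ioo a b, |f' t| ≤ M) :
    |(∫ t in a..b, f t) - (b - a) / 3 * ((f a + f b) / 2 + 2 * f x)| ≤
      M * ((b - a) ^ 2 / 36 + (x - (5 * a + b) / 6) ^ 2 / 2 +
        (x - (a + 5 * b) / 6) ^ 2 / 2) := by
  set α₁ : ℝ := (5 * a + b) / 6 with hα₁
  set α₂ : ℝ := (a + 5 * b) / 6 with hα₂
  have haα₁ : a < α₁ := by rw [hα₁]; linarith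
  have hα₂b : α₂ < b := by rw [hα₂]; linarith
  have hax : a < x := lt_of_lt_of_le haα₁ hx.1
  have hxb : x < b := lt_of_le_of_lt hx.2 hα₂b
  -- measurability of f'
  have hdm : AEStronglyMeasurable f' (volume.restrict (Set.Ioc a b)) := by
    rw [← Measure.restrict_congr_set Ioo_ae_eq_Ioc]
    have : ∀ᵐ t ∂(volume.restrict (Set.Ioo a b)), deriv f t = f' t := by
      rw [ae_restrict_iff' measurableSet_Ioo]
      exact Filter.Eventually.of_forall fun t ht => (hderiv t ht).deriv
    exact (measurable_deriv f).aestronglyMeasurable.congr this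
  -- integrability of (t - c) * f' t on subintervals
  have key_int : ∀ (c p q : ℝ), a ≤ p → q ≤ b → p ≤ q →
      IntervalIntegrable (fun t => (t - c) * f' t) volume p q := by
    intro c p q hap hqb hpq
    rw [intervalIntegrable_iff_integrableOn_Ioc_of_le hpq]
    have hsub : Set.Ioc p q ⊆ Set.Ioc a b := Set.Ioc_subset_Ioc hap hqb
    have hmeas : AEStronglyMeasurable (fun t => (t - c) * f' t)
        (volume.restrict (Set.Ioc p q)) :=
      ((aestronglyMeasurable_id.sub aestronglyMeasurable_const).mul
        (hdm.mono_set hsub))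
    have hconst : MeasureTheory.IntegrableOn (fun _ : ℝ => (|b - a| + |c - a|) * M)
        (Set.Ioc p q) volume :=
      integrableOn_const measure_Ioc_lt_top.ne
    refine MeasureTheory.Integrable.mono' hconst hmeas ?_
    · rw [← Measure.restrict_congr_set Ioo_ae_eq_Ioc, ae_restrict_iff' measurableSet_Ioo]
      refine Filter.Eventually.of_forall fun t ht => ?_
      have ht' : t ∈ Set.Ioo a b := ⟨lt_of_le_of_lt hap ht.1, lt_of_lt_of_le ht.2 hqb⟩
      have h1 : |t - c| ≤ |b - a| + |c - a| := by
        rw [abs_of_nonneg (le_of_lt (sub_pos.2 hab))]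
        rcases abs_cases (c - a) with h | h <;> rcases abs_cases (t - c) with h2 | h2 <;>
          rw [h2.1, h.1] <;> linarith [ht'.1, ht'.2]
      calc ‖(t - c) * f' t‖ = |t - c| * |f' t| := abs_mul _ _
        _ ≤ (|b - a| + |c - a|) * M :=
          mul_le_mul h1 (hbound t ht') (abs_nonneg _) (by positivity)
  -- interval integrability of f on subintervals
  have hf_int : ∀ p q : ℝ, a ≤ p → q ≤ b → p ≤ q →
      IntervalIntegrable f volume p q := by
    intro p q hap hqb hpq
    apply ContinuousOn.intervalIntegrable
    rw [Set.uIcc_of_le hpq]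
    exact hcont.mono (Set.Icc_subset_Icc hap hqb)
  -- FTC identity
  have ftc : ∀ (c p q : ℝ), a ≤ p → q ≤ b → p ≤ q →
      ∫ t in p..q, (f t + (t - c) * f' t) = (q - c) * f q - (p - c) * f p := by
    intro c p q hap hqb hpq
    apply intervalIntegral.integral_eq_sub_of_hasDeriv_right_of_le hpq
    · exact (continuousOn_id.sub continuousOn_const).mul
        (hcont.mono (Set.Icc_subset_Icc hap hqb))
    · intro t ht
      have ht' : t ∈ Set.Ioo a b := ⟨lt_of_le_of_lt hap ht.1, lt_of_lt_of_le ht.2 hqb⟩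
      have h := (((hasDerivAt_id t).sub_const c).mul (hderiv t ht')).hasDerivWithinAt
        (s := Set.Ioi t)
      exact h.congr_deriv (by simp only [id]; ring)
    · exact (hf_int p q hap hqb hpq).add (key_int c p q hap hqb hpq)
  have e1 : ∫ t in a..x, (t - α₁) * f' t
      = (x - α₁) * f x - (a - α₁) * f a - ∫ t in a..x, f t := by
    have := ftc α₁ a x le_rfl hxb.le hax.le
    rw [intervalIntegral.integral_add (hf_int a x le_rfl hxb.le hax.le)
      (key_int α₁ a x le_rfl hxb.le hax.le)] at this
    linarith
  have e2 : ∫ t in x..b, (t - α₂) * f' t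
      = (b - α₂) * f b - (x - α₂) * f x - ∫ t in x..b, f t := by
    have := ftc α₂ x b hax.le le_rfl hxb.le
    rw [intervalIntegral.integral_add (hf_int x b hax.le le_rfl hxb.le)
      (key_int α₂ x b hax.le le_rfl hxb.le)] at this
    linarith
  have hadj : (∫ t in a..x, f t) + ∫ t in x..b, f t = ∫ t in a..b, f t :=
    intervalIntegral.integral_add_adjacent_intervals (hf_int a x le_rfl hxb.le hax.le)
      (hf_int x b hax.le le_rfl hxb.le)
  have hsum : (∫ t in a..x, (t - α₁) * f' t) + (∫ t in x..b, (t - α₂) * f' t)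
      = (b - a) / 3 * ((f a + f b) / 2 + 2 * f x) - ∫ t in a..b, f t := by
    rw [e1, e2, ← hadj, hα₁, hα₂]
    ring
  -- bound each piece
  have bnd : ∀ (c p q : ℝ), a ≤ p → q ≤ b → p ≤ c → c ≤ q →
      |∫ t in p..q, (t - c) * f' t| ≤ M * ((c - p)^2/2 + (q - c)^2/2) := by
    intro c p q hap hqb hpc hcq
    have hpq := hpc.trans hcq
    have hgint : IntervalIntegrable (fun t => |t - c| * M) volume p q :=
      ((continuous_abs.comp (continuous_id.sub continuous_const)).mul
        continuous_const).intervalIntegrable _ _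
    have hae : ∀ᵐ t ∂(volume.restrict (Set.uIoc p q)), ‖(t - c) * f' t‖ ≤ |t - c| * M := by
      rw [Set.uIoc_of_le hpq, ← Measure.restrict_congr_set Ioo_ae_eq_Ioc,
        ae_restrict_iff' measurableSet_Ioo]
      refine Filter.Eventually.of_forall fun t ht => ?_
      have ht' : t ∈ Set.Ioo a b := ⟨lt_of_le_of_lt hap ht.1, lt_of_lt_of_le ht.2 hqb⟩
      rw [Real.norm_eq_abs, abs_mul]
      exact mul_le_mul_of_nonneg_left (hbound t ht') (abs_nonneg _)
    have h := intervalIntegral.norm_integral_le_abs_of_norm_le hae hgint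
    have hg : ∫ t in p..q, |t - c| * M = ((c - p)^2/2 + (q - c)^2/2) * M := by
      rw [intervalIntegral.integral_mul_const, my_integral_abs_sub p c q hpc hcq]
    rw [Real.norm_eq_abs] at h
    rw [hg, abs_of_nonneg (a := ((c - p)^2/2 + (q - c)^2/2) * M)
      (mul_nonneg (by positivity) hM)] at h
    calc |∫ t in p..q, (t - c) * f' t| ≤ ((c - p)^2/2 + (q - c)^2/2) * M := h
      _ = M * ((c - p)^2/2 + (q - c)^2/2) := mul_comm _ _
  have b1 := bnd α₁ a x le_rfl hxb.le haα₁.le hx.1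
  have b2 := bnd α₂ x b hax.le le_rfl hx.2 hα₂b.le
  have harith : M * ((α₁ - a)^2/2 + (x - α₁)^2/2) + M * ((α₂ - x)^2/2 + (b - α₂)^2/2)
      = M * ((b - a) ^ 2 / 36 + (x - α₁) ^ 2 / 2 + (x - α₂) ^ 2 / 2) := by
    rw [hα₁, hα₂]
    ring
  have habs : |(∫ t in a..b, f t) - (b - a) / 3 * ((f a + f b) / 2 + 2 * f x)|
      ≤ |∫ t in a..x, (t - α₁) * f' t| + |∫ t in x..b, (t - α₂) * f' t| := by
    rw [abs_sub_comm, ← hsum]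
    exact abs_add_le _ _
  linarith
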